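/- Let X, Z ∈ ℝ^{n×r} with XᵀZ positive semidefinite, M* = ZZᵀ, XXᵀ ≠ ZZᵀ, λ_r(M*) > 0, and ‖XXᵀ - M*‖_F ≤ ε·λ_r(M*) with 0 < ε ≤ 2(√2-1). Write Z = c₁X + c₂W with ⟨X,W⟩ = 0, ‖W‖_F = 1, and set Y = ((1-c₁²)/2)X - c₁c₂W. Then ‖XXᵀ - ZZᵀ - (XYᵀ + YXᵀ)‖_F ≤ c₂² ≤ ‖X - Z‖_F², and consequently, letting θ be the angle between vec(XXᵀ - ZZᵀ) and vec(XYᵀ + YXᵀ), sin θ ≤ ε/(2(√2-1)) ≤ 1. -/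

import Mathlib

open Matrix

noncomputable def frob {m n : Type*} [Fintype m] [Fintype n] (A : Matrix m n ℝ) : ℝ :=
  Real.sqrt (∑ i, ∑ j, (A i j)^2)

def finner {m n : Type*} [Fintype m] [Fintype n] (A B : Matrix m n ℝ) : ℝ :=
  ∑ i, ∑ j, A i j * B i j

/-- The `k`-th largest eigenvalue (1-indexed) of a Hermitian real matrix. -/
noncomputable def kthLargestEig {n : ℕ} (A : Matrix (Fin n) (Fin n) ℝ)
    (hA : A.IsHermitian) (k : ℕ) : ℝ :=
  ((Finset.univ.val.map hA.eigenvalues).sort (· ≤ ·)).getD (n - k) 0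

namespace Aux15

variable {m r : Type*} [Fintype m] [Fintype r]

lemma frob_nonneg (A : Matrix m r ℝ) : 0 ≤ frob A := Real.sqrt_nonneg _

lemma frob_sq (A : Matrix m r ℝ) : frob A ^ 2 = ∑ i, ∑ j, (A i j)^2 :=
  Real.sq_sqrt (by positivity)

lemma finner_self (A : Matrix m r ℝ) : finner A A = frob A ^ 2 := by
  rw [frob_sq]; simp [finner, sq]

lemma frob_eq_zero {A : Matrix m r ℝ} (h : frob A = 0) : A = 0 := by
  have h2 : ∑ i, ∑ j, (A i j)^2 = 0 := by
    have := frob_sq A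
    rw [h] at this
    nlinarith [this]
  ext i j
  have h3 : ∀ i ∈ (Finset.univ : Finset m), (0:ℝ) ≤ ∑ j, (A i j)^2 := by
    intro i _; positivity
  have h4 : ∑ j, (A i j)^2 = 0 :=
    (Finset.sum_eq_zero_iff_of_nonneg h3).mp h2 i (Finset.mem_univ i)
  have h5 : ∀ j ∈ (Finset.univ : Finset r), (0:ℝ) ≤ (A i j)^2 := by
    intro j _; positivity
  have := (Finset.sum_eq_zero_iff_of_nonneg h5).mp h4 j (Finset.mem_univ j)
  exact pow_eq_zero_iff two_ne_zero |>.mp this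

lemma frob_smul (c : ℝ) (A : Matrix m r ℝ) : frob (c • A) = |c| * frob A := by
  unfold frob
  rw [← Real.sqrt_sq_eq_abs, ← Real.sqrt_mul (by positivity)]
  congr 1
  rw [Finset.mul_sum]
  congr 1; ext i
  rw [Finset.mul_sum]
  congr 1; ext j
  simp [Matrix.smul_apply, mul_pow]

lemma finner_eq_trace (A B : Matrix m r ℝ) : finner A B = (Aᵀ * B).trace := by
  simp only [finner, trace, Matrix.mul_apply, diag, transpose_apply]
  rw [Finset.sum_comm]

lemma sqrt2_facts : 1 < Real.sqrt 2 ∧ Real.sqrt 2 < 1.5 := by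
  constructor
  · nlinarith [Real.sq_sqrt (show (0:ℝ) ≤ 2 by norm_num), Real.sqrt_nonneg 2]
  · nlinarith [Real.sq_sqrt (show (0:ℝ) ≤ 2 by norm_num), Real.sqrt_nonneg 2]

end Aux15

namespace Aux15

variable {m r : Type*} [Fintype m] [Fintype r]

lemma finner_comm (A B : Matrix m r ℝ) : finner A B = finner B A := by
  simp [finner, mul_comm]

lemma finner_add_left (A B C : Matrix m r ℝ) :
    finner (A + B) C = finner A C + finner B C := by
  simp [finner, Matrix.add_apply, add_mul, Finset.sum_add_distrib]

lemma finner_sub_left (A B C : Matrix m r ℝ) :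
    finner (A - B) C = finner A C - finner B C := by
  simp [finner, Matrix.sub_apply, sub_mul, Finset.sum_sub_distrib]

lemma finner_smul_left (c : ℝ) (A B : Matrix m r ℝ) :
    finner (c • A) B = c * finner A B := by
  simp [finner, Matrix.smul_apply, Finset.mul_sum, mul_assoc]

lemma finner_zero_right (A B : Matrix m r ℝ) : finner A 0 = 0 := by
  simp [finner]

lemma finner_sub_sub (A B : Matrix m r ℝ) :
    finner (A - B) (A - B) = finner A A - 2 * finner A B + finner B B := by
  rw [finner_sub_left, finner_comm A (A-B), finner_comm B (A-B),
    finner_sub_left, finner_sub_left, finner_comm B A]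
  ring

/-- Cauchy–Schwarz style bound on `frob (W * Wᵀ)`. -/
lemma frob_mul_transpose_le (W : Matrix m r ℝ) : frob (W * Wᵀ) ≤ frob W ^ 2 := by
  have key : ∑ i, ∑ j, ((W * Wᵀ) i j)^2 ≤ (∑ i, ∑ k, (W i k)^2) * (∑ j, ∑ k, (W j k)^2) := by
    rw [Finset.sum_mul_sum]
    apply Finset.sum_le_sum
    intro i _
    apply Finset.sum_le_sum
    intro j _
    have := Finset.sum_mul_sq_le_sq_mul_sq Finset.univ (fun k => W i k) (fun k => W j k)
    simpa [Matrix.mul_apply, transpose_apply] using this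
  have h1 : frob (W * Wᵀ) ≤ Real.sqrt ((∑ i, ∑ k, (W i k)^2) * (∑ j, ∑ k, (W j k)^2)) :=
    Real.sqrt_le_sqrt key
  calc frob (W * Wᵀ) ≤ _ := h1
    _ = frob W ^ 2 := by
        rw [Real.sqrt_mul (by positivity), pow_two]
        rfl

/-- The key angle/projection bound. -/
lemma sin_bound (a b : Matrix m r ℝ) (ha : frob a ≠ 0) :
    (1 - (finner a b / (frob a * frob b))^2) * frob a ^ 2 ≤ frob (a - b) ^ 2 := by
  have hab : frob (a-b) ^2 = frob a ^2 - 2 * finner a b + frob b ^2 := by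
    rw [← finner_self, finner_sub_sub, finner_self, finner_self]
  by_cases hb : frob b = 0
  · have : b = 0 := frob_eq_zero hb
    subst this
    simp [finner_zero_right, hb]
  · set A := frob a
    set B := frob b
    set t := finner a b
    have hA : 0 < A := lt_of_le_of_ne (frob_nonneg a) (Ne.symm ha)
    have hB : 0 < B := lt_of_le_of_ne (frob_nonneg b) (Ne.symm hb)
    have heq : (1 - (t / (A * B))^2) * A^2 = A^2 - t^2/B^2 := by
      field_simp
    rw [heq, hab]
    have key : 0 ≤ (t - B^2)^2 := sq_nonneg _
    have hB2 : 0 < B^2 := by positivity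
    have e : t^2/B^2 * B^2 = t^2 := div_mul_cancel₀ _ (ne_of_gt hB2)
    nlinarith [key, e, hB2]

end Aux15

namespace Aux15

variable {n r : ℕ}

lemma decomp (X Z W Y : Matrix (Fin n) (Fin r) ℝ) (c₁ c₂ : ℝ)
    (hZ : Z = c₁ • X + c₂ • W)
    (hY : Y = ((1 - c₁ ^ 2) / 2) • X - (c₁ * c₂) • W) :
    X * Xᵀ - Z * Zᵀ - (X * Yᵀ + Y * Xᵀ) = (-(c₂^2)) • (W * Wᵀ) := by
  subst hZ hY
  simp only [transpose_add, transpose_sub, transpose_smul, Matrix.add_mul, Matrix.mul_add,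
    Matrix.sub_mul, Matrix.mul_sub, Matrix.smul_mul, Matrix.mul_smul, smul_smul]
  module

lemma finner_smul_right (c : ℝ) (A B : Matrix (Fin n) (Fin r) ℝ) :
    finner A (c • B) = c * finner A B := by
  rw [finner_comm, finner_smul_left, finner_comm]

lemma finner_add_right (A B C : Matrix (Fin n) (Fin r) ℝ) :
    finner A (B + C) = finner A B + finner A C := by
  rw [finner_comm, finner_add_left, finner_comm B A, finner_comm C A]

lemma finner_lin (a b : ℝ) (U V : Matrix (Fin n) (Fin r) ℝ) :
    finner (a•U + b•V) (a•U + b•V) =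
      a^2 * finner U U + 2*a*b * finner U V + b^2 * finner V V := by
  simp only [finner_add_left, finner_add_right, finner_smul_left, finner_smul_right]
  rw [finner_comm V U]
  ring

end Aux15

namespace Aux15

lemma ct_eq_t {m r : Type*} [Fintype m] [Fintype r] (A : Matrix m r ℝ) : Aᴴ = Aᵀ := by
  ext i j; simp [conjTranspose_apply]

section SpecToolkit

variable {m : ℕ} (A : Matrix (Fin m) (Fin m) ℝ) (hA : A.IsHermitian)

/-- Column `i` of the eigenvector unitary. -/
noncomputable def ecol (i : Fin m) : Fin m → ℝ :=
  fun k => (hA.eigenvectorUnitary : Matrix (Fin m) (Fin m) ℝ) k i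

lemma V_spec :
    A = (hA.eigenvectorUnitary : Matrix (Fin m) (Fin m) ℝ) * diagonal hA.eigenvalues *
      (hA.eigenvectorUnitary : Matrix (Fin m) (Fin m) ℝ)ᵀ := by
  have h := hA.spectral_theorem
  rw [RCLike.ofReal_real_eq_id] at h
  simpa [ct_eq_t, star_eq_conjTranspose] using h

lemma V_mul_Vt :
    (hA.eigenvectorUnitary : Matrix (Fin m) (Fin m) ℝ) *
      (hA.eigenvectorUnitary : Matrix (Fin m) (Fin m) ℝ)ᵀ = 1 := by
  have := (Matrix.mem_unitaryGroup_iff).mp hA.eigenvectorUnitary.2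
  rwa [← ct_eq_t, ← star_eq_conjTranspose]

lemma Vt_mul_V :
    (hA.eigenvectorUnitary : Matrix (Fin m) (Fin m) ℝ)ᵀ *
      (hA.eigenvectorUnitary : Matrix (Fin m) (Fin m) ℝ) = 1 := by
  have := (Matrix.mem_unitaryGroup_iff').mp hA.eigenvectorUnitary.2
  rwa [← ct_eq_t, ← star_eq_conjTranspose]

/-- coordinates of `w` in the eigenbasis -/
noncomputable def ecoord (w : Fin m → ℝ) : Fin m → ℝ :=
  (hA.eigenvectorUnitary : Matrix (Fin m) (Fin m) ℝ)ᵀ *ᵥ w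

lemma ecoord_apply (w : Fin m → ℝ) (i : Fin m) : ecoord A hA w i = ecol A hA i ⬝ᵥ w := by
  simp [ecoord, ecol, mulVec, dotProduct, transpose_apply]

lemma dot_eq_sum_ecoord (w : Fin m → ℝ) : w ⬝ᵥ w = ∑ i, (ecoord A hA w i)^2 := by
  have h1 : w ⬝ᵥ w = w ⬝ᵥ ((1 : Matrix (Fin m) (Fin m) ℝ) *ᵥ w) := by simp
  rw [h1, ← V_mul_Vt A hA, ← Matrix.mulVec_mulVec, Matrix.dotProduct_mulVec,
    ← Matrix.mulVec_transpose]
  simp [ecoord, dotProduct, sq]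

lemma quad_eq_sum (w : Fin m → ℝ) :
    w ⬝ᵥ (A *ᵥ w) = ∑ i, hA.eigenvalues i * (ecoord A hA w i)^2 := by
  conv_lhs => rw [V_spec A hA]
  rw [← Matrix.mulVec_mulVec, Matrix.dotProduct_mulVec, ← Matrix.mulVec_transpose,
    Matrix.transpose_mul, ← Matrix.mulVec_mulVec, Matrix.diagonal_transpose]
  show (diagonal hA.eigenvalues *ᵥ (ecoord A hA w)) ⬝ᵥ (ecoord A hA w) = _
  simp [dotProduct, Matrix.mulVec_diagonal, sq]
  congr 1; ext i; ring

lemma normA_eq_sum (w : Fin m → ℝ) :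
    (A *ᵥ w) ⬝ᵥ (A *ᵥ w) = ∑ i, (hA.eigenvalues i)^2 * (ecoord A hA w i)^2 := by
  conv_lhs => rw [V_spec A hA]
  rw [← Matrix.mulVec_mulVec, ← Matrix.mulVec_mulVec]
  set d := (hA.eigenvectorUnitary : Matrix (Fin m) (Fin m) ℝ)ᵀ *ᵥ w with hd
  set V := (hA.eigenvectorUnitary : Matrix (Fin m) (Fin m) ℝ) with hV
  have h2 : ∀ x y : Fin m → ℝ, (V *ᵥ x) ⬝ᵥ (V *ᵥ y) = x ⬝ᵥ y := by
    intro x y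
    rw [Matrix.dotProduct_mulVec, ← Matrix.mulVec_transpose, Matrix.mulVec_mulVec,
      Vt_mul_V A hA]
    simp
  rw [h2]
  show (diagonal hA.eigenvalues *ᵥ (ecoord A hA w)) ⬝ᵥ (diagonal hA.eigenvalues *ᵥ (ecoord A hA w)) = _
  simp [dotProduct, Matrix.mulVec_diagonal, sq]
  congr 1; ext i; ring

end SpecToolkit
end Aux15

namespace Aux15
section SpecToolkit2
variable {m : ℕ} (A : Matrix (Fin m) (Fin m) ℝ) (hA : A.IsHermitian)

lemma ecol_eq_basis (i : Fin m) : ecol A hA i = ⇑(hA.eigenvectorBasis i) := by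
  ext k
  exact Matrix.IsHermitian.eigenvectorUnitary_apply hA k i

lemma mulVec_ecol (i : Fin m) : A *ᵥ ecol A hA i = hA.eigenvalues i • ecol A hA i := by
  rw [ecol_eq_basis]
  exact hA.mulVec_eigenvectorBasis i

lemma ecol_dot_self (i : Fin m) : ecol A hA i ⬝ᵥ ecol A hA i = 1 := by
  have h := congrFun (congrFun (Vt_mul_V A hA) i) i
  simpa [Matrix.mul_apply, Matrix.one_apply, ecol, dotProduct, transpose_apply] using h

end SpecToolkit2

lemma dot_mul_self {a b : ℕ} (A : Matrix (Fin a) (Fin b) ℝ) (q : Fin b → ℝ) :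
    (A *ᵥ q) ⬝ᵥ (A *ᵥ q) = q ⬝ᵥ ((Aᵀ * A) *ᵥ q) := by
  rw [← Matrix.mulVec_mulVec, Matrix.dotProduct_mulVec q, Matrix.vecMul_transpose]

end Aux15

namespace Aux15
lemma master_eig {n r : ℕ} (Z : Matrix (Fin n) (Fin r) ℝ) (hherm : (Z * Zᵀ).IsHermitian)
    (hlam : 0 < kthLargestEig (Z * Zᵀ) hherm r) :
    (∀ i, hherm.eigenvalues i = 0 ∨ kthLargestEig (Z * Zᵀ) hherm r ≤ hherm.eigenvalues i) ∧
    (r ≤ n → r ≤ (Z * Zᵀ).rank) ∧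
    (n ≤ r → ∀ i, kthLargestEig (Z * Zᵀ) hherm r ≤ hherm.eigenvalues i) := by
  classical
  set lam := kthLargestEig (Z * Zᵀ) hherm r with hlamdef
  set eig := hherm.eigenvalues with heig
  set E : Multiset ℝ := Finset.univ.val.map eig with hE
  set L : List ℝ := E.sort (· ≤ ·) with hL
  have hlen : L.length = n := by
    rw [hL, Multiset.length_sort, hE, Multiset.card_map]
    simp
  have hsorted : L.Pairwise (· ≤ ·) := Multiset.pairwise_sort _ _
  have hcoe : (L : Multiset ℝ) = E := Multiset.sort_eq _ _
  -- nonnegativity of eigenvalues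
  have hpsdM : (Z * Zᵀ).PosSemidef := by
    have := Matrix.posSemidef_self_mul_conjTranspose Z
    rwa [ct_eq_t] at this
  have hnonneg : ∀ i, 0 ≤ eig i := fun i => hpsdM.eigenvalues_nonneg i
  -- index in bounds
  have hk : n - r < n := by
    by_contra h
    push_neg at h
    have h0 : L.getD (n - r) 0 = 0 := List.getD_eq_default _ _ (by omega)
    rw [hlamdef] at hlam
    unfold kthLargestEig at hlam
    rw [← heig, ← hE, ← hL, h0] at hlam
    exact lt_irrefl _ hlam
  have hk' : n - r < L.length := by omega
  have hv : lam = L.get ⟨n - r, hk'⟩ := by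
    rw [hlamdef]
    unfold kthLargestEig
    rw [← heig, ← hE, ← hL, List.getD_eq_getElem _ _ hk']
    rfl
  have C1 : ∀ j : Fin L.length, n - r ≤ (j : ℕ) → lam ≤ L.get j := by
    intro j hj
    rw [hv]
    exact hsorted.rel_get_of_le (by exact hj)
  have hdrop_all : ∀ x ∈ L.drop (n - r), lam ≤ x := by
    intro x hx
    obtain ⟨j, hjx⟩ := List.mem_iff_get.mp hx
    have hlt : n - r + (j : ℕ) < L.length := by
      have h2 : (j : ℕ) < L.length - (n - r) :=
        lt_of_lt_of_eq j.2 List.length_drop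
      omega
    have this : L.get ⟨n - r + j, hlt⟩ = (L.drop (n - r)).get j := by simp
    rw [← hjx, ← this]
    exact C1 ⟨n - r + j, hlt⟩ (by simp)
  -- positive count
  set pb : ℝ → Bool := fun x => decide (0 < x) with hpb
  have hdrop_len : (L.drop (n - r)).length = n - (n - r) := by
    rw [List.length_drop, hlen]
  have hcount_drop : (L.drop (n - r)).countP pb = n - (n - r) := by
    rw [← hdrop_len]
    exact List.countP_eq_length.mpr
      (fun a ha => decide_eq_true (lt_of_lt_of_le hlam (hdrop_all a ha)))
  -- total positive count equals rank
  have hbridge : L.countP pb = (Z * Zᵀ).rank := by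
    have h1 : Multiset.countP (fun x : ℝ => 0 < x) (↑L) = L.countP pb := by
      rw [hpb]
      exact Multiset.coe_countP _ _
    rw [hcoe, hE] at h1
    rw [Multiset.countP_map] at h1
    have h2 : Multiset.card (Multiset.filter (fun a => 0 < eig a) Finset.univ.val) =
        (Finset.univ.filter (fun a => 0 < eig a)).card := by
      rw [Finset.card_def, Finset.filter_val]
    have h3 : (Finset.univ.filter (fun a => 0 < eig a)) =
        (Finset.univ.filter (fun a => eig a ≠ 0)) := by
      apply Finset.filter_congr
      intro x _
      constructor
      · intro hx; exact ne_of_gt hx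
      · intro hx; exact lt_of_le_of_ne (hnonneg x) (Ne.symm hx)
    have h4 : (Z * Zᵀ).rank = Fintype.card {i // eig i ≠ 0} :=
      hherm.rank_eq_card_non_zero_eigs
    rw [Fintype.card_subtype] at h4
    rw [← h1, h2, h3, ← h4]
  have hrank_le : (Z * Zᵀ).rank ≤ r :=
    le_trans (Matrix.rank_mul_le_left Z Zᵀ) (Matrix.rank_le_width Z)
  have hrank_le_n : (Z * Zᵀ).rank ≤ n := Matrix.rank_le_height _
  have hsplit : L.countP pb = (L.take (n-r)).countP pb + (L.drop (n-r)).countP pb := by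
    conv_lhs => rw [← List.take_append_drop (n-r) L]
    exact List.countP_append
  refine ⟨?_, ?_, ?_⟩
  · -- every eigenvalue is 0 or ≥ lam
    intro i
    by_contra hcon
    push_neg at hcon
    obtain ⟨hne0, hlt⟩ := hcon
    have hpos : 0 < eig i := lt_of_le_of_ne (hnonneg i) (Ne.symm hne0)
    have hmem : eig i ∈ L := by
      rw [← Multiset.mem_coe, hcoe, hE]
      exact Multiset.mem_map_of_mem _ (Finset.mem_univ i)
    have hmemtake : eig i ∈ L.take (n - r) := by
      rcases (List.mem_append.mp (by rwa [List.take_append_drop] : eig i ∈ L.take (n-r) ++ L.drop (n-r))) with h | h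
      · exact h
      · exact absurd (hdrop_all _ h) (not_le.mpr hlt)
    have htake_pos : 0 < (L.take (n-r)).countP pb :=
      List.countP_pos_iff.mpr ⟨eig i, hmemtake, decide_eq_true hpos⟩
    omega
  · intro hrn
    omega
  · intro hnr i
    have hmem : eig i ∈ L := by
      rw [← Multiset.mem_coe, hcoe, hE]
      exact Multiset.mem_map_of_mem _ (Finset.mem_univ i)
    have h0 : n - r = 0 := by omega
    apply hdrop_all
    rw [h0, List.drop_zero]
    exact hmem



lemma aux_hker {n r : ℕ} (X Z : Matrix (Fin n) (Fin r) ℝ) (hherm : (Z * Zᵀ).IsHermitian)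
    (hpsd : (Xᵀ * Z).PosSemidef)
    (hlam : 0 < kthLargestEig (Z * Zᵀ) hherm r) :
    ∀ z, Z *ᵥ z = 0 → X *ᵥ z = 0 := by
  obtain ⟨hzero_or, hrank, hall⟩ := master_eig Z hherm hlam
  intro z hz
  rcases le_or_gt r n with hrn | hnr
  · -- r ≤ n : Z has trivial kernel
    have hzz : z = 0 := by
      by_contra hzne
      have hker_nontriv : Nontrivial (LinearMap.ker (Z.mulVecLin)) := by
        refine ⟨⟨⟨z, ?_⟩, 0, ?_⟩⟩
        · simpa [Matrix.mulVecLin_apply] using hz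
        · simp [Subtype.ext_iff, hzne]
      have hkerpos : 0 < Module.finrank ℝ (LinearMap.ker (Z.mulVecLin)) :=
        Module.finrank_pos
      have hrn2 : Z.rank + Module.finrank ℝ (LinearMap.ker (Z.mulVecLin)) = r := by
        have := LinearMap.finrank_range_add_finrank_ker (Z.mulVecLin)
        rw [Matrix.rank]
        simpa using this
      have h1 : r ≤ (Z * Zᵀ).rank := hrank hrn
      have h2 : (Z * Zᵀ).rank ≤ Z.rank := Matrix.rank_mul_le_left Z Zᵀ
      omega
    rw [hzz, Matrix.mulVec_zero]
  · -- n < r : Zᵀ has trivial kernel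
    have hsym : Zᵀ * X = Xᵀ * Z := by
      have h : (Xᵀ * Z)ᵀ = Xᵀ * Z := by rw [← ct_eq_t]; exact hpsd.1
      calc Zᵀ * X = (Xᵀ * Z)ᵀ := by rw [Matrix.transpose_mul, Matrix.transpose_transpose]
        _ = Xᵀ * Z := h
    set w := X *ᵥ z with hw
    have hZtw : Zᵀ *ᵥ w = 0 := by
      rw [hw, Matrix.mulVec_mulVec, hsym, ← Matrix.mulVec_mulVec, hz, Matrix.mulVec_zero]
    have hq : w ⬝ᵥ ((Z * Zᵀ) *ᵥ w) = 0 := by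
      have := dot_mul_self Zᵀ w
      rw [Matrix.transpose_transpose] at this
      rw [← this, hZtw]
      simp
    have hexp := quad_eq_sum (Z * Zᵀ) hherm w
    have hnorm := dot_eq_sum_ecoord (Z * Zᵀ) hherm w
    have hge : kthLargestEig (Z * Zᵀ) hherm r * (w ⬝ᵥ w) ≤ w ⬝ᵥ ((Z * Zᵀ) *ᵥ w) := by
      rw [hexp, hnorm, Finset.mul_sum]
      apply Finset.sum_le_sum
      intro i _
      have h1 := hall (le_of_lt hnr) i
      nlinarith [sq_nonneg (ecoord (Z * Zᵀ) hherm w i)]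
    have hwnn : 0 ≤ w ⬝ᵥ w := by
      rw [hnorm]
      positivity
    have hww : w ⬝ᵥ w = 0 := by nlinarith [hge, hq, hlam, hwnn]
    exact (dotProduct_self_eq_zero).mp hww

lemma aux_hG {n r : ℕ} (Z : Matrix (Fin n) (Fin r) ℝ) (hherm : (Z * Zᵀ).IsHermitian)
    (hlam : 0 < kthLargestEig (Z * Zᵀ) hherm r) :
    ∀ u : Fin r → ℝ, (∀ z, Z *ᵥ z = 0 → u ⬝ᵥ z = 0) →
      kthLargestEig (Z * Zᵀ) hherm r * (u ⬝ᵥ u) ≤ u ⬝ᵥ ((Zᵀ * Z) *ᵥ u) := by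
  set lam := kthLargestEig (Z * Zᵀ) hherm r with hlamdef
  obtain ⟨hzero_or, -, -⟩ := master_eig Z hherm hlam
  intro u huker
  have hGpsd : (Zᵀ * Z).PosSemidef := by
    have := Matrix.posSemidef_conjTranspose_mul_self Z
    rwa [ct_eq_t] at this
  have hGherm : (Zᵀ * Z).IsHermitian := hGpsd.1
  have hexp := quad_eq_sum (Zᵀ * Z) hGherm u
  have hnorm := dot_eq_sum_ecoord (Zᵀ * Z) hGherm u
  rw [hexp, hnorm, Finset.mul_sum]
  apply Finset.sum_le_sum
  intro j _
  have hν : 0 ≤ hGherm.eigenvalues j := hGpsd.eigenvalues_nonneg j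
  rcases eq_or_lt_of_le hν with hν0 | hνpos
  · -- zero eigenvalue: the coordinate vanishes
    set q := ecol (Zᵀ * Z) hGherm j with hq
    have heq : (Zᵀ * Z) *ᵥ q = 0 := by
      rw [hq, mulVec_ecol, ← hν0, zero_smul]
    have hZq : Z *ᵥ q = 0 := by
      apply (dotProduct_self_eq_zero).mp
      rw [dot_mul_self, heq, dotProduct_zero]
    have huq : u ⬝ᵥ q = 0 := huker q hZq
    have hd : ecoord (Zᵀ * Z) hGherm u j = 0 := by
      rw [ecoord_apply, ← hq, dotProduct_comm]
      exact huq
    rw [hd]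
    simp
  · -- positive eigenvalue: it is at least lam
    set ν := hGherm.eigenvalues j with hν2
    set q := ecol (Zᵀ * Z) hGherm j with hq
    set w := Z *ᵥ q with hw
    have hGq : (Zᵀ * Z) *ᵥ q = ν • q := by rw [hq, mulVec_ecol]
    have hww : w ⬝ᵥ w = ν := by
      rw [hw, dot_mul_self, hGq, dotProduct_smul, smul_eq_mul, hq,
        ecol_dot_self, mul_one]
    have hMw : (Z * Zᵀ) *ᵥ w = ν • w := by
      rw [hw, Matrix.mulVec_mulVec, Matrix.mul_assoc, ← Matrix.mulVec_mulVec, hGq,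
        Matrix.mulVec_smul]
    have key : lam * (w ⬝ᵥ ((Z * Zᵀ) *ᵥ w)) ≤ ((Z * Zᵀ) *ᵥ w) ⬝ᵥ ((Z * Zᵀ) *ᵥ w) := by
      rw [quad_eq_sum (Z * Zᵀ) hherm w, normA_eq_sum (Z * Zᵀ) hherm w, Finset.mul_sum]
      apply Finset.sum_le_sum
      intro i _
      rcases hzero_or i with h0 | hge
      · rw [h0]; simp
      · rw [← hlamdef] at hge
        have h1 : 0 < hherm.eigenvalues i := lt_of_lt_of_le hlam hge
        have hd := sq_nonneg (ecoord (Z * Zᵀ) hherm w i)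
        nlinarith [mul_nonneg (mul_nonneg (sub_nonneg.mpr hge) h1.le) hd]
    rw [hMw] at key
    have key2 : lam * (ν * ν) ≤ ν * ν * ν := by
      have e1 : w ⬝ᵥ (ν • w) = ν * ν := by
        rw [dotProduct_smul, smul_eq_mul, hww]
      have e2 : (ν • w) ⬝ᵥ (ν • w) = ν * ν * ν := by
        rw [smul_dotProduct, dotProduct_smul, smul_eq_mul, smul_eq_mul, hww]
        ring
      rw [e1] at key
      rw [e2] at key
      exact key
    have hlamν : lam ≤ ν := by
      have h3 : lam * (ν*ν) ≤ ν * (ν*ν) := by nlinarith [key2]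
      exact le_of_mul_le_mul_right h3 (mul_pos hνpos hνpos)
    exact mul_le_mul_of_nonneg_right hlamν (sq_nonneg _)


lemma dot_self_nonneg {a : ℕ} (v : Fin a → ℝ) : 0 ≤ v ⬝ᵥ v := by
  have : v ⬝ᵥ v = ∑ i, (v i)^2 := by simp [dotProduct, sq]
  rw [this]; positivity

lemma dotT {a b : ℕ} (A : Matrix (Fin a) (Fin b) ℝ) (x : Fin a → ℝ) (z : Fin b → ℝ) :
    (Aᵀ *ᵥ x) ⬝ᵥ z = x ⬝ᵥ (A *ᵥ z) := by
  rw [Matrix.dotProduct_mulVec x, Matrix.mulVec_transpose]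

lemma trace_ABCD {a b : ℕ} (A : Matrix (Fin a) (Fin b) ℝ) (B : Matrix (Fin b) (Fin a) ℝ)
    (C : Matrix (Fin a) (Fin b) ℝ) (D : Matrix (Fin b) (Fin a) ℝ) :
    (A*B*(C*D)).trace = (B*C*(D*A)).trace := by
  rw [Matrix.mul_assoc A B (C*D), Matrix.trace_mul_comm A (B*(C*D))]
  simp only [Matrix.mul_assoc]

lemma trace_mul_diag {a : ℕ} (M : Matrix (Fin a) (Fin a) ℝ) (d : Fin a → ℝ) :
    (M * diagonal d).trace = ∑ i, M i i * d i := by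
  simp [Matrix.trace, Matrix.diag, Matrix.mul_diagonal]

lemma conj_diag_entry {a : ℕ} (M V : Matrix (Fin a) (Fin a) ℝ) (i : Fin a) :
    (Vᵀ * M * V) i i = (fun k => V k i) ⬝ᵥ (M *ᵥ fun k => V k i) := by
  simp only [Matrix.mul_apply, Matrix.transpose_apply, Matrix.mulVec, dotProduct,
    Finset.sum_mul, Finset.mul_sum]
  rw [Finset.sum_comm]
  apply Finset.sum_congr rfl
  intro k _
  apply Finset.sum_congr rfl
  intro l _
  ring

lemma trace_mul_spec {a : ℕ} (M V : Matrix (Fin a) (Fin a) ℝ) (d : Fin a → ℝ) :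
    (M * (V * diagonal d * Vᵀ)).trace = ∑ i, ((fun k => V k i) ⬝ᵥ (M *ᵥ fun k => V k i)) * d i := by
  calc (M * (V * diagonal d * Vᵀ)).trace
      = ((M * V * diagonal d) * Vᵀ).trace := by simp only [Matrix.mul_assoc]
    _ = (Vᵀ * (M * V * diagonal d)).trace := Matrix.trace_mul_comm _ _
    _ = ((Vᵀ * M * V) * diagonal d).trace := by simp only [Matrix.mul_assoc]
    _ = ∑ i, (Vᵀ * M * V) i i * d i := trace_mul_diag _ _
    _ = ∑ i, ((fun k => V k i) ⬝ᵥ (M *ᵥ fun k => V k i)) * d i := by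
        apply Finset.sum_congr rfl
        intro i _
        rw [conj_diag_entry]

lemma trace_conj {a : ℕ} (M V : Matrix (Fin a) (Fin a) ℝ) (hV : V * Vᵀ = 1) :
    (Vᵀ * M * V).trace = M.trace := by
  calc (Vᵀ * M * V).trace = (Vᵀ * (M * V)).trace := by simp only [Matrix.mul_assoc]
    _ = ((M * V) * Vᵀ).trace := Matrix.trace_mul_comm _ _
    _ = (M * (V * Vᵀ)).trace := by simp only [Matrix.mul_assoc]
    _ = M.trace := by rw [hV, Matrix.mul_one]

lemma conj_mul_conj {a : ℕ} (S V : Matrix (Fin a) (Fin a) ℝ) (hV : V * Vᵀ = 1) :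
    (Vᵀ * S * V) * (Vᵀ * S * V) = Vᵀ * (S * S) * V := by
  calc (Vᵀ * S * V) * (Vᵀ * S * V) = (Vᵀ * S) * (V * Vᵀ) * (S * V) := by
        simp only [Matrix.mul_assoc]
    _ = Vᵀ * (S * S) * V := by rw [hV, Matrix.mul_one]; simp only [Matrix.mul_assoc]

lemma trace_sq_ge_diag {a : ℕ} (S : Matrix (Fin a) (Fin a) ℝ) (hS : Sᵀ = S) :
    ∑ i, (S i i)^2 ≤ (S * S).trace := by
  have h1 : (S * S).trace = ∑ i, ∑ j, (S i j)^2 := by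
    simp only [Matrix.trace, Matrix.diag, Matrix.mul_apply]
    apply Finset.sum_congr rfl
    intro i _
    apply Finset.sum_congr rfl
    intro j _
    have h2 : S j i = S i j := by
      calc S j i = Sᵀ i j := rfl
        _ = S i j := by rw [hS]
    rw [h2, sq]
  rw [h1]
  apply Finset.sum_le_sum
  intro i _
  exact Finset.single_le_sum (fun j _ => sq_nonneg (S i j)) (Finset.mem_univ i)

lemma scalar_ineq (lam p s g : ℝ) (hp : 0 ≤ p) (hl : 0 ≤ lam) (hsg : 0 ≤ s + g)
    (hgl : p ≠ 0 → lam ≤ g) :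
    2*(Real.sqrt 2 - 1) * lam * p ≤ p^2 + 2*s^2 + 4*s*p + 2*g*p := by
  have hs2 : Real.sqrt 2 ^ 2 = 2 := Real.sq_sqrt (by norm_num)
  have h1 : 1 < Real.sqrt 2 := by nlinarith [Real.sqrt_nonneg 2]
  have h15 : Real.sqrt 2 < 1.5 := by nlinarith [Real.sqrt_nonneg 2]
  rcases eq_or_lt_of_le hp with h0 | hp0
  · rw [← h0]
    nlinarith [sq_nonneg s]
  · have hlg : lam ≤ g := hgl hp0.ne'
    rcases le_or_gt p g with hpg | hgp
    · nlinarith [sq_nonneg (s+p), mul_nonneg hp0.le (sub_nonneg.mpr hpg),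
        mul_nonneg hp0.le (sub_nonneg.mpr hlg),
        mul_nonneg (mul_nonneg hp0.le hl) (show (0:ℝ) ≤ 1 - 2*(Real.sqrt 2 - 1) by nlinarith)]
    · have key : (p - Real.sqrt 2 * g)^2 = p^2 - 2*Real.sqrt 2*p*g + 2*g^2 := by
        linear_combination g^2 * hs2
      nlinarith [mul_nonneg hsg (show (0:ℝ) ≤ s + 2*p - g by linarith),
        key ▸ sq_nonneg (p - Real.sqrt 2 * g),
        mul_nonneg (mul_nonneg (show (0:ℝ) ≤ 2*(Real.sqrt 2 - 1) by nlinarith)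
          (sub_nonneg.mpr hlg)) hp0.le]


lemma crux_trace {n r : ℕ} (X Z : Matrix (Fin n) (Fin r) ℝ) (lam : ℝ)
    (hpsd : (Xᵀ * Z).PosSemidef)
    (hG : ∀ u : Fin r → ℝ, (∀ z, Z *ᵥ z = 0 → u ⬝ᵥ z = 0) →
      lam * (u ⬝ᵥ u) ≤ u ⬝ᵥ ((Zᵀ * Z) *ᵥ u))
    (hker : ∀ z, Z *ᵥ z = 0 → X *ᵥ z = 0)
    (hlam0 : 0 ≤ lam) :
    2*(Real.sqrt 2 - 1) * lam * ((X - Z)ᵀ * (X - Z)).trace ≤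
      ((X * Xᵀ - Z * Zᵀ)ᵀ * (X * Xᵀ - Z * Zᵀ)).trace := by
  set H : Matrix (Fin n) (Fin r) ℝ := X - Z with hH
  have hsym : Zᵀ * X = Xᵀ * Z := by
    have h : (Xᵀ * Z)ᵀ = Xᵀ * Z := by rw [← ct_eq_t]; exact hpsd.1
    calc Zᵀ * X = (Xᵀ * Z)ᵀ := by rw [Matrix.transpose_mul, Matrix.transpose_transpose]
      _ = Xᵀ * Z := h
  have hsymH : Zᵀ * H = Hᵀ * Z := by
    rw [hH]
    simp only [Matrix.mul_sub, Matrix.sub_mul, Matrix.transpose_sub, hsym]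
  have hSsym : (Hᵀ * Z)ᵀ = Hᵀ * Z := by
    rw [Matrix.transpose_mul, Matrix.transpose_transpose, hsymH]
  have hC : X * Xᵀ - Z * Zᵀ = Z * Hᵀ + H * Zᵀ + H * Hᵀ := by
    rw [hH]
    simp only [Matrix.transpose_sub, Matrix.sub_mul, Matrix.mul_sub]
    abel
  have hCt : (X * Xᵀ - Z * Zᵀ)ᵀ = X * Xᵀ - Z * Zᵀ := by
    simp [Matrix.transpose_sub, Matrix.transpose_mul]
  have I1 : ((X * Xᵀ - Z * Zᵀ)ᵀ * (X * Xᵀ - Z * Zᵀ)).trace =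
      ((Hᵀ*H) * (Hᵀ*H)).trace + 2*((Hᵀ*Z) * (Hᵀ*Z)).trace
        + 4*((Hᵀ*Z) * (Hᵀ*H)).trace + 2*((Zᵀ*Z) * (Hᵀ*H)).trace := by
    rw [hCt, hC]
    simp only [Matrix.add_mul, Matrix.mul_add, Matrix.trace_add]
    rw [trace_ABCD Z Hᵀ Z Hᵀ, trace_ABCD Z Hᵀ H Zᵀ, trace_ABCD Z Hᵀ H Hᵀ,
        trace_ABCD H Zᵀ Z Hᵀ, trace_ABCD H Zᵀ H Zᵀ, trace_ABCD H Zᵀ H Hᵀ,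
        trace_ABCD H Hᵀ Z Hᵀ, trace_ABCD H Hᵀ H Zᵀ, trace_ABCD H Hᵀ H Hᵀ]
    simp only [hsymH]
    rw [Matrix.trace_mul_comm (Hᵀ*H) (Zᵀ*Z), Matrix.trace_mul_comm (Hᵀ*H) (Hᵀ*Z)]
    ring
  -- spectral decomposition of P = HᵀH
  have hPpsd : (Hᵀ * H).PosSemidef := by
    have := Matrix.posSemidef_conjTranspose_mul_self H
    rwa [ct_eq_t] at this
  have hPh : (Hᵀ * H).IsHermitian := hPpsd.1
  have hpe0 : ∀ i, 0 ≤ hPh.eigenvalues i := fun i => hPpsd.eigenvalues_nonneg i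
  have TA : ((Hᵀ*Z) * (Hᵀ*H)).trace =
      ∑ i, (ecol (Hᵀ*H) hPh i ⬝ᵥ ((Hᵀ*Z) *ᵥ ecol (Hᵀ*H) hPh i)) * hPh.eigenvalues i := by
    conv_lhs => rw [V_spec (Hᵀ*H) hPh]
    exact trace_mul_spec _ _ _
  have TB : ((Zᵀ*Z) * (Hᵀ*H)).trace =
      ∑ i, (ecol (Hᵀ*H) hPh i ⬝ᵥ ((Zᵀ*Z) *ᵥ ecol (Hᵀ*H) hPh i)) * hPh.eigenvalues i := by
    conv_lhs => rw [V_spec (Hᵀ*H) hPh]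
    exact trace_mul_spec _ _ _
  have TC : ((Hᵀ*H) * (Hᵀ*H)).trace = ∑ i, hPh.eigenvalues i * hPh.eigenvalues i := by
    have h1 : ((Hᵀ*H) * (Hᵀ*H)).trace =
        ∑ i, (ecol (Hᵀ*H) hPh i ⬝ᵥ ((Hᵀ*H) *ᵥ ecol (Hᵀ*H) hPh i)) * hPh.eigenvalues i := by
      nth_rewrite 2 [V_spec (Hᵀ*H) hPh]
      exact trace_mul_spec _ _ _
    rw [h1]
    apply Finset.sum_congr rfl
    intro i _
    rw [mulVec_ecol, dotProduct_smul, smul_eq_mul, ecol_dot_self, mul_one]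
  have TD : (Hᵀ*H).trace = ∑ i, hPh.eigenvalues i := by
    have h1 : ((1 : Matrix (Fin r) (Fin r) ℝ) * (Hᵀ*H)).trace =
        ∑ i, (ecol (Hᵀ*H) hPh i ⬝ᵥ ((1 : Matrix (Fin r) (Fin r) ℝ) *ᵥ ecol (Hᵀ*H) hPh i)) *
          hPh.eigenvalues i := by
      conv_lhs => rw [V_spec (Hᵀ*H) hPh]
      exact trace_mul_spec _ _ _
    rw [Matrix.one_mul] at h1
    rw [h1]
    apply Finset.sum_congr rfl
    intro i _
    rw [Matrix.one_mulVec, ecol_dot_self, one_mul]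
  have TE : ∑ i, (ecol (Hᵀ*H) hPh i ⬝ᵥ ((Hᵀ*Z) *ᵥ ecol (Hᵀ*H) hPh i))^2 ≤
      ((Hᵀ*Z) * (Hᵀ*Z)).trace := by
    set V : Matrix (Fin r) (Fin r) ℝ := (hPh.eigenvectorUnitary : Matrix (Fin r) (Fin r) ℝ)
      with hVdef
    have hVVt : V * Vᵀ = 1 := V_mul_Vt (Hᵀ*H) hPh
    have hS'sym : (Vᵀ * (Hᵀ*Z) * V)ᵀ = Vᵀ * (Hᵀ*Z) * V := by
      rw [Matrix.transpose_mul, Matrix.transpose_mul, Matrix.transpose_transpose, hSsym]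
      simp only [Matrix.mul_assoc]
    have h1 := trace_sq_ge_diag (Vᵀ * (Hᵀ*Z) * V) hS'sym
    rw [conj_mul_conj _ _ hVVt, trace_conj _ _ hVVt] at h1
    refine le_trans (le_of_eq ?_) h1
    apply Finset.sum_congr rfl
    intro i _
    rw [conj_diag_entry]
    rfl
  -- constraints
  have hsg : ∀ i, 0 ≤ (ecol (Hᵀ*H) hPh i ⬝ᵥ ((Hᵀ*Z) *ᵥ ecol (Hᵀ*H) hPh i)) +
      (ecol (Hᵀ*H) hPh i ⬝ᵥ ((Zᵀ*Z) *ᵥ ecol (Hᵀ*H) hPh i)) := by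
    intro i
    have hSG : Hᵀ*Z + Zᵀ*Z = Xᵀ*Z := by
      rw [hH]
      simp only [Matrix.transpose_sub, Matrix.sub_mul]
      abel
    rw [← dotProduct_add, ← Matrix.add_mulVec, hSG]
    have := hpsd.dotProduct_mulVec_nonneg (ecol (Hᵀ*H) hPh i)
    simpa using this
  have hgl : ∀ i, hPh.eigenvalues i ≠ 0 →
      lam ≤ ecol (Hᵀ*H) hPh i ⬝ᵥ ((Zᵀ*Z) *ᵥ ecol (Hᵀ*H) hPh i) := by
    intro i hne
    have hprem : ∀ z, Z *ᵥ z = 0 → ecol (Hᵀ*H) hPh i ⬝ᵥ z = 0 := by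
      intro z hz
      have hXz := hker z hz
      have hHz : H *ᵥ z = 0 := by
        rw [hH, Matrix.sub_mulVec, hXz, hz, sub_zero]
      have h2 : hPh.eigenvalues i * (ecol (Hᵀ*H) hPh i ⬝ᵥ z) = 0 := by
        rw [← smul_eq_mul, ← smul_dotProduct, ← mulVec_ecol (Hᵀ*H) hPh i,
          ← Matrix.mulVec_mulVec, dotT, hHz, dotProduct_zero]
      rcases mul_eq_zero.mp h2 with h | h
      · exact absurd h hne
      · exact h
    have := hG (ecol (Hᵀ*H) hPh i) hprem
    rwa [ecol_dot_self, mul_one] at this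
  -- final chain
  rw [I1]
  calc 2*(Real.sqrt 2 - 1) * lam * (Hᵀ * H).trace
      = ∑ i, 2*(Real.sqrt 2 - 1) * lam * hPh.eigenvalues i := by
        rw [TD, Finset.mul_sum]
    _ ≤ ∑ i, (hPh.eigenvalues i * hPh.eigenvalues i
          + 2*(ecol (Hᵀ*H) hPh i ⬝ᵥ ((Hᵀ*Z) *ᵥ ecol (Hᵀ*H) hPh i))^2
          + 4*((ecol (Hᵀ*H) hPh i ⬝ᵥ ((Hᵀ*Z) *ᵥ ecol (Hᵀ*H) hPh i)) * hPh.eigenvalues i)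
          + 2*((ecol (Hᵀ*H) hPh i ⬝ᵥ ((Zᵀ*Z) *ᵥ ecol (Hᵀ*H) hPh i)) * hPh.eigenvalues i)) := by
        apply Finset.sum_le_sum
        intro i _
        have := scalar_ineq lam (hPh.eigenvalues i)
          (ecol (Hᵀ*H) hPh i ⬝ᵥ ((Hᵀ*Z) *ᵥ ecol (Hᵀ*H) hPh i))
          (ecol (Hᵀ*H) hPh i ⬝ᵥ ((Zᵀ*Z) *ᵥ ecol (Hᵀ*H) hPh i))
          (hpe0 i) hlam0 (hsg i) (hgl i)
        nlinarith [this]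
    _ = (∑ i, hPh.eigenvalues i * hPh.eigenvalues i)
          + 2*(∑ i, (ecol (Hᵀ*H) hPh i ⬝ᵥ ((Hᵀ*Z) *ᵥ ecol (Hᵀ*H) hPh i))^2)
          + 4*(∑ i, (ecol (Hᵀ*H) hPh i ⬝ᵥ ((Hᵀ*Z) *ᵥ ecol (Hᵀ*H) hPh i)) * hPh.eigenvalues i)
          + 2*(∑ i, (ecol (Hᵀ*H) hPh i ⬝ᵥ ((Zᵀ*Z) *ᵥ ecol (Hᵀ*H) hPh i)) * hPh.eigenvalues i) := by
        rw [Finset.mul_sum, Finset.mul_sum, Finset.mul_sum, ← Finset.sum_add_distrib,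
          ← Finset.sum_add_distrib, ← Finset.sum_add_distrib]
    _ ≤ ((Hᵀ*H) * (Hᵀ*H)).trace + 2*((Hᵀ*Z) * (Hᵀ*Z)).trace
          + 4*((Hᵀ*Z) * (Hᵀ*H)).trace + 2*((Zᵀ*Z) * (Hᵀ*H)).trace := by
        rw [← TC, ← TA, ← TB]
        have h2 := TE
        linarith


lemma crux {n r : ℕ} (X Z : Matrix (Fin n) (Fin r) ℝ) (lam : ℝ)
    (hpsd : (Xᵀ * Z).PosSemidef)
    (hG : ∀ u : Fin r → ℝ, (∀ z, Z *ᵥ z = 0 → u ⬝ᵥ z = 0) →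
      lam * (u ⬝ᵥ u) ≤ u ⬝ᵥ ((Zᵀ * Z) *ᵥ u))
    (hker : ∀ z, Z *ᵥ z = 0 → X *ᵥ z = 0)
    (hlam0 : 0 ≤ lam) :
    2*(Real.sqrt 2 - 1) * lam * frob (X - Z)^2 ≤ frob (X * Xᵀ - Z * Zᵀ)^2 := by
  have h1 : frob (X - Z)^2 = ((X - Z)ᵀ * (X - Z)).trace := by
    rw [← finner_self, finner_eq_trace]
  have h2 : frob (X * Xᵀ - Z * Zᵀ)^2 = ((X * Xᵀ - Z * Zᵀ)ᵀ * (X * Xᵀ - Z * Zᵀ)).trace := by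
    rw [← finner_self, finner_eq_trace]
  rw [h1, h2]
  exact crux_trace X Z lam hpsd hG hker hlam0

end Aux15

set_option maxHeartbeats 1000000 in
open Aux15 in
theorem stmt_15 {n r : ℕ} (X Z W : Matrix (Fin n) (Fin r) ℝ) (c₁ c₂ ε : ℝ)
    (hpsd : (Xᵀ * Z).PosSemidef)
    (hne : X * Xᵀ ≠ Z * Zᵀ)
    (hherm : (Z * Zᵀ).IsHermitian)
    (hlam : 0 < kthLargestEig (Z * Zᵀ) hherm r)
    (hZ : Z = c₁ • X + c₂ • W)
    (hXW : finner X W = 0) (hWnorm : frob W = 1)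
    (hε0 : 0 < ε) (hε1 : ε ≤ 2 * (Real.sqrt 2 - 1))
    (hclose : frob (X * Xᵀ - Z * Zᵀ) ≤ ε * kthLargestEig (Z * Zᵀ) hherm r)
    (Y : Matrix (Fin n) (Fin r) ℝ) (hY : Y = ((1 - c₁ ^ 2) / 2) • X - (c₁ * c₂) • W)
    (cosθ : ℝ)
    (hcos : cosθ = finner (X * Xᵀ - Z * Zᵀ) (X * Yᵀ + Y * Xᵀ) /
      (frob (X * Xᵀ - Z * Zᵀ) * frob (X * Yᵀ + Y * Xᵀ))) :
    frob (X * Xᵀ - Z * Zᵀ - (X * Yᵀ + Y * Xᵀ)) ≤ c₂ ^ 2 ∧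
      c₂ ^ 2 ≤ frob (X - Z) ^ 2 ∧
      Real.sqrt (1 - cosθ ^ 2) ≤ ε / (2 * (Real.sqrt 2 - 1)) ∧
      ε / (2 * (Real.sqrt 2 - 1)) ≤ 1 := by
  obtain ⟨hs1, hs2⟩ := sqrt2_facts
  have hden : 0 < 2 * (Real.sqrt 2 - 1) := by linarith
  set lam := kthLargestEig (Z * Zᵀ) hherm r with hlamdef
  -- part 1
  have part1 : frob (X * Xᵀ - Z * Zᵀ - (X * Yᵀ + Y * Xᵀ)) ≤ c₂ ^ 2 := by
    rw [decomp X Z W Y c₁ c₂ hZ hY, frob_smul]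
    have h1 : |(-(c₂^2))| = c₂^2 := by
      rw [abs_neg, abs_of_nonneg (sq_nonneg c₂)]
    rw [h1]
    calc c₂^2 * frob (W * Wᵀ) ≤ c₂^2 * (frob W ^2) := by
          exact mul_le_mul_of_nonneg_left (frob_mul_transpose_le W) (sq_nonneg c₂)
      _ = c₂ ^ 2 := by rw [hWnorm]; ring
  -- part 2
  have hXZ : X - Z = (1-c₁) • X + (-c₂) • W := by
    rw [hZ]; module
  have hfWW : finner W W = 1 := by rw [finner_self, hWnorm]; norm_num
  have hfXX : 0 ≤ finner X X := by rw [finner_self]; positivity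
  have part2 : c₂ ^ 2 ≤ frob (X - Z) ^ 2 := by
    rw [← finner_self, hXZ, finner_lin, hXW, hfWW]
    nlinarith [hfXX]
  -- part 4
  have part4 : ε / (2 * (Real.sqrt 2 - 1)) ≤ 1 := by
    rw [div_le_one hden]; exact hε1
  -- part 3
  have hane : frob (X * Xᵀ - Z * Zᵀ) ≠ 0 := by
    intro h
    exact hne (sub_eq_zero.mp (frob_eq_zero h))
  have hA : 0 < frob (X * Xᵀ - Z * Zᵀ) :=
    lt_of_le_of_ne (frob_nonneg _) (Ne.symm hane)
  set A := frob (X * Xᵀ - Z * Zᵀ) with hAdef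
  have hcrux := crux X Z lam hpsd (aux_hG Z hherm hlam) (aux_hker X Z hherm hpsd hlam)
    (le_of_lt hlam)
  set K := ε / (2 * (Real.sqrt 2 - 1)) with hKdef
  have hK0 : 0 ≤ K := le_of_lt (div_pos hε0 hden)
  have hEKA : frob (X * Xᵀ - Z * Zᵀ - (X * Yᵀ + Y * Xᵀ)) ≤ K * A := by
    have h1 : 2*(Real.sqrt 2 - 1) * lam * (frob (X * Xᵀ - Z * Zᵀ - (X * Yᵀ + Y * Xᵀ))) ≤
        A * (ε * lam) := by
      calc 2*(Real.sqrt 2 - 1) * lam * (frob (X * Xᵀ - Z * Zᵀ - (X * Yᵀ + Y * Xᵀ)))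
          ≤ 2*(Real.sqrt 2 - 1) * lam * (c₂^2) := by
            apply mul_le_mul_of_nonneg_left part1
            positivity
        _ ≤ 2*(Real.sqrt 2 - 1) * lam * frob (X - Z)^2 := by
            apply mul_le_mul_of_nonneg_left part2
            positivity
        _ ≤ A^2 := hcrux
        _ ≤ A * (ε * lam) := by
            rw [pow_two]
            exact mul_le_mul_of_nonneg_left hclose (le_of_lt hA)
    rw [hKdef]
    rw [div_mul_eq_mul_div, le_div_iff₀ hden]
    nlinarith [hlam, h1]
  have hsin : 1 - cosθ^2 ≤ K^2 := by
    have hsb := sin_bound (X * Xᵀ - Z * Zᵀ) (X * Yᵀ + Y * Xᵀ) hane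
    rw [← hcos] at hsb
    have hE2 : frob (X * Xᵀ - Z * Zᵀ - (X * Yᵀ + Y * Xᵀ))^2 ≤ (K*A)^2 := by
      apply pow_le_pow_left₀ (frob_nonneg _) hEKA
    have h3 : (1 - cosθ^2) * A^2 ≤ K^2 * A^2 := by
      calc (1 - cosθ^2) * A^2 ≤ (K*A)^2 := le_trans hsb hE2
        _ = K^2 * A^2 := by ring
    have hA2 : 0 < A^2 := by positivity
    exact le_of_mul_le_mul_right h3 hA2
  refine ⟨part1, part2, ?_, part4⟩
  calc Real.sqrt (1 - cosθ^2) ≤ Real.sqrt (K^2) := Real.sqrt_le_sqrt hsin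
    _ = K := Real.sqrt_sq hK0
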